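/- Let p = (p_j) be a sequence with p_j ∈ (1,∞) for all j. The following are equivalent: (i) ρ_p is right-continuous on ℓ^{(p_n)}, i.e., for every a ∈ ℓ^{(p_n)} and λ₀ > 0, ρ_p(λa) → ρ_p(λ₀a) as λ → λ₀ from the right; (ii) sup_j p_j < ∞; (iii) ρ_p satisfies the Δ₂-property, i.e., for every sequence (x_k) of elements of ℝ^ℕ, ρ_p(x_k) → 0 implies ρ_p(2x_k) → 0. -/

import Mathlib

open Filter Topology ENNReal

/-- The Nakano modular `ρ_p((a_j)) = Σ_j |a_j|^{p_j}` on `ℝ^ℕ`. -/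
noncomputable def seqModular (p : ℕ → ℝ) (a : ℕ → ℝ) : ℝ≥0∞ :=
  ∑' j, ENNReal.ofReal (|a j| ^ p j)

/-- `X_ρ`, the modular vector space associated to a modular `ρ`. -/
def modularSet {X : Type*} [AddCommGroup X] [Module ℝ X] (ρ : X → ℝ≥0∞) : Set X :=
  {v : X | ∃ l : ℝ, 0 < l ∧ ρ (l • v) < ⊤}

/-- Monotonicity of the modular in the scalar. -/
lemma seqMod_mono (p : ℕ → ℝ) (hp0 : ∀ j, 0 ≤ p j) (a : ℕ → ℝ) {c d : ℝ}
    (hc : 0 ≤ c) (hcd : c ≤ d) : seqModular p (c • a) ≤ seqModular p (d • a) := by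
  apply ENNReal.tsum_le_tsum
  intro j
  apply ENNReal.ofReal_le_ofReal
  apply Real.rpow_le_rpow (abs_nonneg _) _ (hp0 j)
  simp only [Pi.smul_apply, smul_eq_mul, abs_mul]
  exact mul_le_mul_of_nonneg_right
    (by rw [abs_of_nonneg hc, abs_of_nonneg (hc.trans hcd)]; exact hcd) (abs_nonneg _)

/-- If the exponents are bounded by `M` then scaling by `c ≥ 1` multiplies the modular
by at most `c ^ M`. -/
lemma seqMod_smul_le (p : ℕ → ℝ) {M : ℝ} (hM : ∀ j, p j ≤ M) (a : ℕ → ℝ) {c : ℝ}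
    (hc : 1 ≤ c) : seqModular p (c • a) ≤ ENNReal.ofReal (c ^ M) * seqModular p a := by
  have hc0 : (0:ℝ) ≤ c := zero_le_one.trans hc
  rw [seqModular, seqModular, ← ENNReal.tsum_mul_left]
  apply ENNReal.tsum_le_tsum
  intro j
  rw [← ENNReal.ofReal_mul (Real.rpow_nonneg hc0 _)]
  apply ENNReal.ofReal_le_ofReal
  have h1 : |(c • a) j| = c * |a j| := by
    simp [abs_mul, abs_of_nonneg hc0]
  rw [h1, Real.mul_rpow hc0 (abs_nonneg _)]
  exact mul_le_mul_of_nonneg_right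
    (Real.rpow_le_rpow_of_exponent_le hc (hM j))
    (Real.rpow_nonneg (abs_nonneg _) _)

/-- If the exponents are unbounded, there is an element of finite modular all of whose
dilations by `l > 1` have infinite modular. -/
lemma seqMod_counterexample (p : ℕ → ℝ) (hp : ∀ j, 1 < p j)
    (hM : ∀ M : ℝ, ∃ j, M < p j) :
    ∃ a : ℕ → ℝ, seqModular p a < ⊤ ∧ ∀ l : ℝ, 1 < l → seqModular p (l • a) = ⊤ := by
  classical
  have hrec : ∀ (k m : ℕ), ∃ j, m < j ∧ ((k:ℝ)+1)^2 < p j := by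
    intro k m
    obtain ⟨j, hj⟩ := hM (max (((k:ℝ)+1)^2) ((Finset.range (m+1)).sup' (by simp) p))
    refine ⟨j, ?_, lt_of_le_of_lt (le_max_left _ _) hj⟩
    by_contra h
    push_neg at h
    have h1 : p j ≤ (Finset.range (m+1)).sup' (by simp) p :=
      Finset.le_sup' p (Finset.mem_range.mpr (Nat.lt_succ_of_le h))
    have h2 := le_max_right (((k:ℝ)+1)^2) ((Finset.range (m+1)).sup' (by simp) p)
    linarith
  choose g hg1 hg2 using hrec
  set J : ℕ → ℕ := fun k => Nat.rec (g 0 0) (fun k prev => g (k+1) prev) k with hJ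
  have hJsucc : ∀ k, J (k+1) = g (k+1) (J k) := fun k => rfl
  have hJmono : StrictMono J :=
    strictMono_nat_of_lt_succ (fun k => by rw [hJsucc]; exact hg1 (k+1) (J k))
  have hJp : ∀ k : ℕ, ((k:ℝ)+1)^2 < p (J k) := by
    intro k
    cases k with
    | zero => exact hg2 0 0
    | succ n => rw [hJsucc]; exact hg2 (n+1) (J n)
  set a : ℕ → ℝ := fun j =>
    if h : ∃ k, J k = j then (2:ℝ) ^ (-(((h.choose : ℕ):ℝ)+1) / p j) else 0 with ha
  have haJ : ∀ k, a (J k) = (2:ℝ) ^ (-((k:ℝ)+1) / p (J k)) := by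
    intro k
    have h : ∃ k', J k' = J k := ⟨k, rfl⟩
    have hck : h.choose = k := hJmono.injective h.choose_spec
    rw [ha]
    simp only
    rw [dif_pos h, hck]
  have hpne : ∀ j, p j ≠ 0 := fun j => (zero_lt_one.trans (hp j)).ne'
  have hval : ∀ k, |a (J k)| ^ p (J k) = ((1:ℝ)/2) ^ (k+1) := by
    intro k
    rw [haJ k, abs_of_nonneg (Real.rpow_nonneg (by norm_num) _),
      ← Real.rpow_mul (by norm_num), div_mul_cancel₀ _ (hpne (J k))]
    rw [show -((k:ℝ)+1) = -(((k+1 : ℕ)):ℝ) by push_cast; ring,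
      Real.rpow_neg (by norm_num), Real.rpow_natCast]
    simp [one_div, inv_pow]
  have hsupp : Function.support a ⊆ Set.range J := by
    intro j hj
    by_contra hc
    apply hj
    rw [ha]
    simp only
    rw [dif_neg]
    rintro ⟨k, hk⟩
    exact hc ⟨k, hk⟩
  refine ⟨a, ?_, ?_⟩
  · rw [seqModular,
      ← Function.Injective.tsum_eq hJmono.injective
        (f := fun j => ENNReal.ofReal (|a j| ^ p j)) ?_]
    · have heq : ∀ k : ℕ, ENNReal.ofReal (|a (J k)| ^ p (J k)) =
          ENNReal.ofReal (((1:ℝ)/2) ^ (k+1)) := fun k => by rw [hval k]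
      calc ∑' k, ENNReal.ofReal (|a (J k)| ^ p (J k))
          = ∑' k : ℕ, ENNReal.ofReal (((1:ℝ)/2) ^ (k+1)) := by
            exact tsum_congr heq
        _ < ⊤ := by
            rw [← ENNReal.ofReal_tsum_of_nonneg (fun k => by positivity)
              (((summable_geometric_of_lt_one (r := (1:ℝ)/2) (by norm_num) (by norm_num)).mul_left
                ((1:ℝ)/2)).congr (fun k => by ring))]
            exact ENNReal.ofReal_lt_top
    · intro j hj
      by_contra hc
      have haj : a j = 0 := by
        by_contra hne
        exact hc (hsupp hne)
      exact hj (by simp [haj, Real.zero_rpow (hpne j)])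
  · intro l hl
    have hl0 : (0:ℝ) ≤ l := by linarith
    obtain ⟨K, hK⟩ : ∃ K : ℕ, (2:ℝ) ≤ l ^ K := by
      obtain ⟨K, hK⟩ := pow_unbounded_of_one_lt (2:ℝ) hl
      exact ⟨K, hK.le⟩
    have hterm : ∀ k : ℕ, K ≤ k →
        (1:ℝ≥0∞) ≤ ENNReal.ofReal (|l * a (J k)| ^ p (J k)) := by
      intro k hk
      have hlpos : (0:ℝ) < l := by linarith
      have habs : |l * a (J k)| ^ p (J k) = l ^ p (J k) * ((1:ℝ)/2) ^ (k+1) := by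
        rw [abs_mul, abs_of_pos hlpos,
          Real.mul_rpow hl0 (abs_nonneg _), hval k]
      have hexp : ((K * (k+1) : ℕ) : ℝ) ≤ p (J k) := by
        have h1 : (K * (k+1) : ℕ) ≤ (k+1)*(k+1) :=
          Nat.mul_le_mul (hk.trans (Nat.le_succ k)) le_rfl
        have h2 : (((k+1)*(k+1) : ℕ) : ℝ) ≤ p (J k) := by
          push_cast
          have := hJp k
          nlinarith
        calc ((K * (k+1) : ℕ) : ℝ) ≤ (((k+1)*(k+1) : ℕ) : ℝ) := by exact_mod_cast h1
          _ ≤ p (J k) := h2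
      have h3 : (2:ℝ) ^ (k+1) ≤ l ^ p (J k) := by
        calc (2:ℝ) ^ (k+1) ≤ (l ^ K) ^ (k+1) :=
              pow_le_pow_left₀ (by norm_num) hK _
          _ = l ^ (K * (k+1) : ℕ) := by rw [pow_mul]
          _ = l ^ ((K * (k+1) : ℕ) : ℝ) := by rw [Real.rpow_natCast]
          _ ≤ l ^ p (J k) := Real.rpow_le_rpow_of_exponent_le hl.le hexp
      have h4 : (1:ℝ) ≤ |l * a (J k)| ^ p (J k) := by
        rw [habs]
        calc (1:ℝ) = (2:ℝ)^(k+1) * ((1:ℝ)/2)^(k+1) := by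
              rw [← mul_pow]; norm_num
          _ ≤ l ^ p (J k) * ((1:ℝ)/2) ^ (k+1) :=
              mul_le_mul_of_nonneg_right h3 (by positivity)
      calc (1:ℝ≥0∞) = ENNReal.ofReal 1 := by simp
        _ ≤ _ := ENNReal.ofReal_le_ofReal h4
    rw [seqModular, eq_top_iff]
    calc (⊤ : ℝ≥0∞) = ∑' _ : ℕ, (1:ℝ≥0∞) :=
          (ENNReal.tsum_const_eq_top_of_ne_zero one_ne_zero).symm
      _ ≤ ∑' k : ℕ, ENNReal.ofReal (|(l • a) (J (k + K))| ^ p (J (k + K))) := by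
          apply ENNReal.tsum_le_tsum
          intro k
          exact hterm (k + K) (Nat.le_add_left K k)
      _ ≤ ∑' k : ℕ, ENNReal.ofReal (|(l • a) (J k)| ^ p (J k)) :=
          tsum_comp_le_tsum_of_injective (add_left_injective K)
            (fun k => ENNReal.ofReal (|(l • a) (J k)| ^ p (J k)))
      _ ≤ ∑' j, ENNReal.ofReal (|(l • a) j| ^ p j) :=
          tsum_comp_le_tsum_of_injective hJmono.injective _

/-- For `p = (p_j) ⊆ (1,∞)` the following are equivalent:
(i) `ρ_p` is right-continuous on `ℓ^{(p_n)} = modularSet (seqModular p)`;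
(ii) `sup_j p_j < ∞`;
(iii) `ρ_p` satisfies the `Δ₂`-property. -/
theorem seqModular_right_continuous_iff_sup_finite_iff_delta2
    (p : ℕ → ℝ) (hp : ∀ j, 1 < p j) :
    ((∀ a ∈ modularSet (seqModular p), ∀ l₀ : ℝ, 0 < l₀ →
        Tendsto (fun l : ℝ => seqModular p (l • a)) (nhdsWithin l₀ (Set.Ioi l₀))
          (nhds (seqModular p (l₀ • a)))) ↔
      (∃ M : ℝ, ∀ j, p j ≤ M)) ∧
    ((∃ M : ℝ, ∀ j, p j ≤ M) ↔
      (∀ x : ℕ → ℕ → ℝ, Tendsto (fun k => seqModular p (x k)) atTop (nhds 0) →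
        Tendsto (fun k => seqModular p ((2 : ℝ) • x k)) atTop (nhds 0))) := by
  have hp0 : ∀ j, 0 ≤ p j := fun j => (zero_lt_one.trans (hp j)).le
  constructor
  · constructor
    · -- (i) → (ii)
      intro hi
      by_contra hM
      push_neg at hM
      obtain ⟨a, hfin, hinf⟩ := seqMod_counterexample p hp hM
      have hmem : a ∈ modularSet (seqModular p) :=
        ⟨1, one_pos, by simpa [one_smul] using hfin⟩
      have ht := hi a hmem 1 one_pos
      rw [one_smul] at ht
      have h1 : ∀ᶠ l in nhdsWithin (1:ℝ) (Set.Ioi 1),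
          seqModular p (l • a) < seqModular p a + 1 :=
        ht.eventually_lt_const (ENNReal.lt_add_right hfin.ne one_ne_zero)
      have h2 : ∀ᶠ l in nhdsWithin (1:ℝ) (Set.Ioi 1), l ∈ Set.Ioi (1:ℝ) :=
        self_mem_nhdsWithin
      obtain ⟨l, hl1, hl2⟩ := (h1.and h2).exists
      rw [hinf l hl2] at hl1
      exact not_top_lt hl1
    · -- (ii) → (i)
      rintro ⟨M, hM⟩ a _ l₀ hl₀
      by_cases hC : seqModular p (l₀ • a) = ⊤
      · rw [hC]
        have heq : (fun l : ℝ => seqModular p (l • a)) =ᶠ[nhdsWithin l₀ (Set.Ioi l₀)]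
            fun _ => (⊤ : ℝ≥0∞) := by
          filter_upwards [self_mem_nhdsWithin] with l hl
          exact top_le_iff.mp (hC ▸ seqMod_mono p hp0 a hl₀.le (le_of_lt hl))
        exact Tendsto.congr' heq.symm tendsto_const_nhds
      · have t1 : Tendsto (fun l : ℝ => l / l₀) (nhdsWithin l₀ (Set.Ioi l₀)) (nhds 1) := by
          have h : Tendsto (fun l : ℝ => l / l₀) (nhdsWithin l₀ (Set.Ioi l₀)) (nhds (l₀ / l₀)) :=
            (tendsto_id.div_const l₀).mono_left nhdsWithin_le_nhds
          simpa [div_self hl₀.ne'] using h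
        have t2 : Tendsto (fun l : ℝ => (l / l₀) ^ M) (nhdsWithin l₀ (Set.Ioi l₀)) (nhds 1) := by
          have h := (Real.continuousAt_rpow_const 1 M (Or.inl one_ne_zero)).tendsto.comp t1
          simpa [Real.one_rpow, Function.comp_def] using h
        have t3 : Tendsto
            (fun l : ℝ => ENNReal.ofReal ((l / l₀) ^ M) * seqModular p (l₀ • a))
            (nhdsWithin l₀ (Set.Ioi l₀)) (nhds (seqModular p (l₀ • a))) := by
          have h := ENNReal.Tendsto.mul_const (b := seqModular p (l₀ • a))
            ((ENNReal.continuous_ofReal.tendsto 1).comp t2)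
            (Or.inl (by simp))
          simpa [ENNReal.ofReal_one, one_mul, Function.comp] using h
        apply tendsto_of_tendsto_of_tendsto_of_le_of_le' tendsto_const_nhds t3
        · filter_upwards [self_mem_nhdsWithin] with l hl
          exact seqMod_mono p hp0 a hl₀.le (le_of_lt hl)
        · filter_upwards [self_mem_nhdsWithin] with l hl
          have hdiv : (1:ℝ) ≤ l / l₀ := (one_le_div hl₀).mpr (le_of_lt hl)
          have hre : l • a = (l / l₀) • (l₀ • a) := by
            rw [smul_smul, div_mul_cancel₀ _ hl₀.ne']
          rw [hre]
          exact seqMod_smul_le p hM (l₀ • a) hdiv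
  · constructor
    · -- (ii) → (iii)
      rintro ⟨M, hM⟩ x hx
      have key : ∀ k, seqModular p ((2:ℝ) • x k) ≤
          ENNReal.ofReal (2 ^ M) * seqModular p (x k) :=
        fun k => seqMod_smul_le p hM (x k) one_le_two
      have hmul : Tendsto (fun k => ENNReal.ofReal (2 ^ M) * seqModular p (x k))
          atTop (nhds 0) := by
        have h := ENNReal.Tendsto.const_mul (a := ENNReal.ofReal (2 ^ M)) hx
          (Or.inr ENNReal.ofReal_ne_top)
        simpa using h
      exact tendsto_of_tendsto_of_tendsto_of_le_of_le tendsto_const_nhds hmul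
        (fun k => zero_le) key
    · -- (iii) → (ii)
      intro h3
      by_contra hM
      push_neg at hM
      choose j hj using fun k : ℕ => hM (k : ℝ)
      classical
      set x : ℕ → ℕ → ℝ := fun k i => if i = j k then (1/2:ℝ) else 0 with hxdef
      have hpne : ∀ i, p i ≠ 0 := fun i => (zero_lt_one.trans (hp i)).ne'
      have hx1 : ∀ k, seqModular p (x k) = ENNReal.ofReal ((1/2:ℝ) ^ p (j k)) := by
        intro k
        rw [seqModular, tsum_eq_single (j k)]
        · simp only [hxdef, if_pos rfl]
          rw [abs_of_pos (by norm_num : (0:ℝ) < 1/2)]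
        · intro b hb
          simp [hxdef, hb, Real.zero_rpow (hpne b)]
      have hx2 : ∀ k, seqModular p ((2:ℝ) • x k) = 1 := by
        intro k
        rw [seqModular, tsum_eq_single (j k)]
        · simp only [Pi.smul_apply, smul_eq_mul, hxdef, if_pos rfl]
          norm_num
        · intro b hb
          simp [hxdef, hb, Real.zero_rpow (hpne b)]
      have hxt : Tendsto (fun k => seqModular p (x k)) atTop (nhds 0) := by
        have hub : ∀ k, seqModular p (x k) ≤ ENNReal.ofReal ((1/2:ℝ) ^ (k:ℕ)) := by
          intro k
          rw [hx1 k]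
          apply ENNReal.ofReal_le_ofReal
          rw [show ((1/2:ℝ) ^ (k:ℕ)) = (1/2:ℝ) ^ ((k:ℕ):ℝ) by rw [Real.rpow_natCast]]
          exact Real.rpow_le_rpow_of_exponent_ge (by norm_num) (by norm_num) (hj k).le
        have hup : Tendsto (fun k : ℕ => ENNReal.ofReal ((1/2:ℝ) ^ k)) atTop (nhds 0) := by
          have h := (ENNReal.continuous_ofReal.tendsto 0).comp
            (tendsto_pow_atTop_nhds_zero_of_lt_one (by norm_num : (0:ℝ) ≤ 1/2)
              (by norm_num : (1/2:ℝ) < 1))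
          simpa [Function.comp_def] using h
        exact tendsto_of_tendsto_of_tendsto_of_le_of_le tendsto_const_nhds hup
          (fun k => zero_le) hub
      have := h3 x hxt
      rw [tendsto_congr (fun k => hx2 k)] at this
      exact one_ne_zero (tendsto_nhds_unique this tendsto_const_nhds).symm
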